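/- For any two σ-algebras A and B on a probability space, the maximal correlation coefficient and uniform mixing coefficient satisfy ρ(A,B) ≤ 2·√(φ(A,B)). -/

import Mathlib

open MeasureTheory ProbabilityTheory Set Filter
open scoped ENNReal NNReal

/-- Maximal correlation coefficient `ρ(𝒜,ℬ)` between two sub-σ-algebras:
the supremum of `∫ f g dμ` over mean-zero, `L²`-bounded `f, g` measurable with respect to
`mA`, `mB` respectively. -/
noncomputable def rhoCoeff {Ω : Type*} {mΩ : MeasurableSpace Ω} (μ : Measure Ω)
    (mA mB : MeasurableSpace Ω) : ℝ :=
  sSup {r : ℝ | ∃ f g : Ω → ℝ,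
    Measurable[mA] f ∧ Measurable[mB] g ∧ MemLp f 2 μ ∧ MemLp g 2 μ ∧
    (∫ x, f x ∂μ) = 0 ∧ (∫ x, g x ∂μ) = 0 ∧
    (∫ x, (f x) ^ 2 ∂μ) ≤ 1 ∧ (∫ x, (g x) ^ 2 ∂μ) ≤ 1 ∧
    r = ∫ x, f x * g x ∂μ}

/-- Uniform mixing coefficient `φ(𝒜,ℬ) = sup {|μ(B|A) − μ(B)|}` over `A ∈ mA` with
`μ(A) > 0` and `B ∈ mB`. -/
noncomputable def phiCoeff {Ω : Type*} {mΩ : MeasurableSpace Ω} (μ : Measure Ω)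
    (mA mB : MeasurableSpace Ω) : ℝ :=
  sSup {r : ℝ | ∃ A B : Set Ω, MeasurableSet[mA] A ∧ MeasurableSet[mB] B ∧ μ A ≠ 0 ∧
    r = |(μ (A ∩ B)).toReal / (μ A).toReal - (μ B).toReal|}

/-- Absolute regularity coefficient `β(𝒜,ℬ)`: half the supremum over finite measurable
partitions `{Aᵢ} ⊆ mA`, `{Bⱼ} ⊆ mB` of `∑ᵢ∑ⱼ |μ(Aᵢ ∩ Bⱼ) − μ(Aᵢ)μ(Bⱼ)|`. -/
noncomputable def betaCoeff {Ω : Type*} {mΩ : MeasurableSpace Ω} (μ : Measure Ω)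
    (mA mB : MeasurableSpace Ω) : ℝ :=
  sSup {r : ℝ | ∃ (n m : ℕ) (A : Fin n → Set Ω) (B : Fin m → Set Ω),
    (∀ i, MeasurableSet[mA] (A i)) ∧ (∀ j, MeasurableSet[mB] (B j)) ∧
    Pairwise (Function.onFun Disjoint A) ∧ Pairwise (Function.onFun Disjoint B) ∧
    (⋃ i, A i) = Set.univ ∧ (⋃ j, B j) = Set.univ ∧
    r = (1/2) * ∑ i, ∑ j, |(μ (A i ∩ B j)).toReal - (μ (A i)).toReal * (μ (B j)).toReal|}

lemma exists_approx {α : Type*} [MeasurableSpace α] {ν : Measure α} {f : α → ℝ}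
    (hf : MemLp f 2 ν) {ε : ℝ≥0∞} (hε : ε ≠ 0) :
    ∃ g : SimpleFunc α ℝ, eLpNorm (f - ⇑g) 2 ν < ε := by
  obtain ⟨g, hg, -⟩ := hf.exists_simpleFunc_eLpNorm_sub_lt (by norm_num) hε
  exact ⟨g, hg⟩


section Helpers

variable {Ω : Type*} {m : MeasurableSpace Ω} {μ : Measure Ω}


lemma myIntegrable_mul [IsFiniteMeasure μ] {f g : Ω → ℝ} (hf : MemLp f 2 μ) (hg : MemLp g 2 μ) :
    Integrable (fun x => f x * g x) μ := by
  have : MemLp (f • g) 1 μ := hg.smul hf (hpqr := ⟨by norm_num [ENNReal.inv_two_add_inv_two]⟩)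
  exact this.integrable le_rfl

lemma sqrt_integral_sq {f : Ω → ℝ} (hf : MemLp f 2 μ) :
    Real.sqrt (∫ x, (f x) ^ 2 ∂μ) = (eLpNorm f 2 μ).toReal := by
  have h1 : (∫ x, (f x) ^ 2 ∂μ) = ‖hf.toLp f‖ ^ 2 := by
    have h2 : (inner ℝ (hf.toLp f) (hf.toLp f) : ℝ) = ∫ x, (f x) ^ 2 ∂μ := by
      rw [L2.inner_def]
      refine integral_congr_ae ?_
      filter_upwards [hf.coeFn_toLp] with x hx
      simp [hx, sq]
    rw [← h2, real_inner_self_eq_norm_sq]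
  rw [h1, Real.sqrt_sq (norm_nonneg _), Lp.norm_toLp f hf]

lemma abs_integral_mul_le {f g : Ω → ℝ} (hf : MemLp f 2 μ) (hg : MemLp g 2 μ) :
    |∫ x, f x * g x ∂μ| ≤ (eLpNorm f 2 μ).toReal * (eLpNorm g 2 μ).toReal := by
  have h1 : (inner ℝ (hf.toLp f) (hg.toLp g) : ℝ) = ∫ x, f x * g x ∂μ := by
    rw [L2.inner_def]
    refine integral_congr_ae ?_
    filter_upwards [hf.coeFn_toLp, hg.coeFn_toLp] with x hx hy
    simp [hx, hy, mul_comm]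
  rw [← h1, ← Lp.norm_toLp f hf, ← Lp.norm_toLp g hg]
  exact abs_real_inner_le_norm _ _

lemma abs_integral_le [IsProbabilityMeasure μ] {f : Ω → ℝ} (hf : MemLp f 2 μ) :
    |∫ x, f x ∂μ| ≤ (eLpNorm f 2 μ).toReal := by
  have h1 : MemLp (fun _ : Ω => (1:ℝ)) 2 μ := memLp_const 1
  have := abs_integral_mul_le hf h1
  simpa [← sqrt_integral_sq h1] using this


lemma expand_mul [IsFiniteMeasure μ] {f g : Ω → ℝ} (hf : Measurable f) (hg : Measurable g)
    {s t : Finset ℝ} (hfs : ∀ x, f x ∈ s) (hgt : ∀ x, g x ∈ t) :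
    ∫ x, f x * g x ∂μ
      = ∑ a ∈ s, ∑ b ∈ t, a * b * (μ (f ⁻¹' {a} ∩ g ⁻¹' {b})).toReal := by
  have hpt : ∀ x, f x * g x
      = ∑ a ∈ s, ∑ b ∈ t, Set.indicator (f ⁻¹' {a} ∩ g ⁻¹' {b}) (fun _ => a * b) x := by
    intro x
    classical
    have inner : ∀ a : ℝ, ∑ b ∈ t, Set.indicator (f ⁻¹' {a} ∩ g ⁻¹' {b}) (fun _ => a * b) x
        = if f x = a then a * g x else 0 := by
      intro a
      by_cases hfa : f x = a
      · simp only [Set.indicator_apply, Set.mem_inter_iff, Set.mem_preimage,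
          Set.mem_singleton_iff, hfa, true_and]
        rw [Finset.sum_ite_eq t (g x) (fun b => a * b)]
        simp [hgt x]
      · simp [Set.indicator_apply, Set.mem_preimage, hfa]
    simp_rw [inner]
    rw [Finset.sum_ite_eq s (f x) (fun a => a * g x)]
    simp [hfs x]
  rw [integral_congr_ae (Eventually.of_forall hpt)]
  rw [integral_finset_sum]
  · refine Finset.sum_congr rfl (fun a _ => ?_)
    rw [integral_finset_sum]
    · refine Finset.sum_congr rfl (fun b _ => ?_)
      rw [integral_indicator_const]
      · simp [mul_comm, measureReal_def]
      · exact (hf (measurableSet_singleton a)).inter (hg (measurableSet_singleton b))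
    · intro b _
      exact (integrable_const (a * b)).indicator
        ((hf (measurableSet_singleton a)).inter (hg (measurableSet_singleton b)))
  · intro a _
    refine integrable_finset_sum _ (fun b _ => ?_)
    exact (integrable_const (a * b)).indicator
      ((hf (measurableSet_singleton a)).inter (hg (measurableSet_singleton b)))

lemma expand_single [IsProbabilityMeasure μ] {f : Ω → ℝ} (hf : Measurable f)
    {s : Finset ℝ} (hfs : ∀ x, f x ∈ s) :
    ∫ x, f x ∂μ = ∑ a ∈ s, a * (μ (f ⁻¹' {a})).toReal := by
  have h1 : ∀ x, (fun _ : Ω => (1:ℝ)) x ∈ ({1} : Finset ℝ) := by simp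
  have := expand_mul (μ := μ) hf measurable_const hfs h1
  simpa using this

lemma expand_sq [IsFiniteMeasure μ] {f : Ω → ℝ} (hf : Measurable f)
    {s : Finset ℝ} (hfs : ∀ x, f x ∈ s) :
    ∫ x, (f x) ^ 2 ∂μ = ∑ a ∈ s, a ^ 2 * (μ (f ⁻¹' {a})).toReal := by
  have := expand_mul (μ := μ) hf hf hfs hfs
  simp_rw [← sq] at this
  rw [this]
  refine Finset.sum_congr rfl (fun a ha => ?_)
  rw [Finset.sum_eq_single a]
  · rw [Set.inter_self]; ring
  · intro b _ hb
    have : f ⁻¹' {a} ∩ f ⁻¹' {b} = ∅ := by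
      ext x
      simp only [Set.mem_inter_iff, Set.mem_preimage, Set.mem_singleton_iff,
        Set.mem_empty_iff_false, iff_false]
      rintro ⟨h1, h2⟩
      exact hb (h1 ▸ h2 ▸ rfl)
    simp [this]
  · intro h
    exact absurd ha h

end Helpers

section Main

variable {Ω : Type*} {m : MeasurableSpace Ω} {μ : Measure Ω} {mA mB : MeasurableSpace Ω}


lemma phi_bddAbove [IsProbabilityMeasure μ] :
    BddAbove {r : ℝ | ∃ A B : Set Ω, MeasurableSet[mA] A ∧ MeasurableSet[mB] B ∧ μ A ≠ 0 ∧
    r = |(μ (A ∩ B)).toReal / (μ A).toReal - (μ B).toReal|} := by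
  refine ⟨1, ?_⟩
  rintro r ⟨A, B, _, _, hA0, rfl⟩
  have hAfin : μ A ≠ ⊤ := measure_ne_top μ A
  have hc : 0 < (μ A).toReal := ENNReal.toReal_pos hA0 hAfin
  have h1 : (μ (A ∩ B)).toReal ≤ (μ A).toReal :=
    ENNReal.toReal_mono hAfin (measure_mono inter_subset_left)
  have h2 : (μ (A ∩ B)).toReal / (μ A).toReal ≤ 1 := by
    rw [div_le_one hc]; exact h1
  have h3 : 0 ≤ (μ (A ∩ B)).toReal / (μ A).toReal := by positivity
  have h4 : (μ B).toReal ≤ 1 := by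
    have := measure_mono (subset_univ B) (μ := μ)
    simpa using ENNReal.toReal_mono (by simp) this
  have h5 : (0:ℝ) ≤ (μ B).toReal := ENNReal.toReal_nonneg
  rw [abs_sub_le_iff]; constructor <;> linarith

lemma phiCoeff_nonneg [IsProbabilityMeasure μ] : 0 ≤ phiCoeff μ mA mB := by
  refine le_csSup phi_bddAbove ?_
  exact ⟨univ, ∅, MeasurableSet.univ, MeasurableSet.empty, by simp, by simp⟩

lemma phi_bound [IsProbabilityMeasure μ] {A B : Set Ω}
    (hAm : MeasurableSet[mA] A) (hBm : MeasurableSet[mB] B) :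
    |(μ (A ∩ B)).toReal - (μ A).toReal * (μ B).toReal|
      ≤ phiCoeff μ mA mB * (μ A).toReal := by
  by_cases hA0 : μ A = 0
  · have h1 : μ (A ∩ B) = 0 := measure_mono_null inter_subset_left hA0
    simp [hA0, h1]
  · have hr : |(μ (A ∩ B)).toReal / (μ A).toReal - (μ B).toReal| ≤ phiCoeff μ mA mB :=
      le_csSup phi_bddAbove ⟨A, B, hAm, hBm, hA0, rfl⟩
    have hc : 0 < (μ A).toReal := ENNReal.toReal_pos hA0 (measure_ne_top μ A)
    have key : (μ (A ∩ B)).toReal - (μ A).toReal * (μ B).toReal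
        = ((μ (A ∩ B)).toReal / (μ A).toReal - (μ B).toReal) * (μ A).toReal := by
      field_simp
    rw [key, abs_mul, abs_of_pos hc]
    exact mul_le_mul_of_nonneg_right hr hc.le
lemma core_lemma [IsProbabilityMeasure μ] (hA : mA ≤ m) (hB : mB ≤ m)
    (s t : Finset ℝ) (F G : ℝ → Set Ω)
    (hFm : ∀ a, MeasurableSet[mA] (F a)) (hGm : ∀ b, MeasurableSet[mB] (G b))
    (hFd : ∀ a a', a ≠ a' → Disjoint (F a) (F a'))
    (hGd : ∀ b b', b ≠ b' → Disjoint (G b) (G b')) :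
    |∑ a ∈ s, ∑ b ∈ t,
        a * b * ((μ (F a ∩ G b)).toReal - (μ (F a)).toReal * (μ (G b)).toReal)|
      ≤ 2 * Real.sqrt (phiCoeff μ mA mB)
        * Real.sqrt (∑ a ∈ s, a ^ 2 * (μ (F a)).toReal)
        * Real.sqrt (∑ b ∈ t, b ^ 2 * (μ (G b)).toReal) := by
  set φ := phiCoeff μ mA mB with hφdef
  have hφ0 : 0 ≤ φ := phiCoeff_nonneg
  set d : ℝ → ℝ → ℝ :=
    fun a b => (μ (F a ∩ G b)).toReal - (μ (F a)).toReal * (μ (G b)).toReal with hd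
  -- partial row sums
  have subrow : ∀ a : ℝ, ∀ u : Finset ℝ, |∑ b ∈ u, d a b| ≤ φ * (μ (F a)).toReal := by
    intro a u
    have hUm : MeasurableSet[mB] (⋃ b ∈ u, G b) :=
      MeasurableSet.biUnion u.countable_toSet (fun b _ => hGm b)
    have h1 : μ (F a ∩ ⋃ b ∈ u, G b) = ∑ b ∈ u, μ (F a ∩ G b) := by
      rw [inter_iUnion₂]
      exact measure_biUnion_finset
        (fun b hb b' hb' hbb' => (hGd b b' hbb').mono inter_subset_right inter_subset_right)
        (fun b _ => (hA _ (hFm a)).inter (hB _ (hGm b)))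
    have h2 : μ (⋃ b ∈ u, G b) = ∑ b ∈ u, μ (G b) :=
      measure_biUnion_finset
        (fun b hb b' hb' hbb' => hGd b b' hbb') (fun b _ => hB _ (hGm b))
    have h3 : ∑ b ∈ u, d a b
        = (μ (F a ∩ ⋃ b ∈ u, G b)).toReal
          - (μ (F a)).toReal * (μ (⋃ b ∈ u, G b)).toReal := by
      rw [h1, h2, ENNReal.toReal_sum (fun b _ => measure_ne_top μ _),
        ENNReal.toReal_sum (fun b _ => measure_ne_top μ _), Finset.mul_sum,
        ← Finset.sum_sub_distrib]
    rw [h3]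
    exact phi_bound (hFm a) hUm
  have rowsum : ∀ a : ℝ, ∑ b ∈ t, |d a b| ≤ 2 * φ * (μ (F a)).toReal := by
    intro a
    have hsplit := Finset.sum_filter_add_sum_filter_not t (fun b => 0 ≤ d a b)
      (fun b => |d a b|)
    have e1 : ∑ b ∈ t.filter (fun b => 0 ≤ d a b), |d a b|
        = ∑ b ∈ t.filter (fun b => 0 ≤ d a b), d a b :=
      Finset.sum_congr rfl (fun b hb => abs_of_nonneg (Finset.mem_filter.mp hb).2)
    have e2 : ∑ b ∈ t.filter (fun b => ¬ 0 ≤ d a b), |d a b|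
        = - ∑ b ∈ t.filter (fun b => ¬ 0 ≤ d a b), d a b := by
      rw [← Finset.sum_neg_distrib]
      exact Finset.sum_congr rfl
        (fun b hb => abs_of_neg (lt_of_not_ge (Finset.mem_filter.mp hb).2))
    have b1 := subrow a (t.filter (fun b => 0 ≤ d a b))
    have b2 := subrow a (t.filter (fun b => ¬ 0 ≤ d a b))
    rw [abs_le] at b1 b2
    calc ∑ b ∈ t, |d a b|
        = ∑ b ∈ t.filter (fun b => 0 ≤ d a b), |d a b|
          + ∑ b ∈ t.filter (fun b => ¬ 0 ≤ d a b), |d a b| := hsplit.symm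
      _ ≤ φ * (μ (F a)).toReal + φ * (μ (F a)).toReal := by
          rw [e1, e2]; linarith [b1.2, b2.1]
      _ = 2 * φ * (μ (F a)).toReal := by ring
  have colsum : ∀ b : ℝ, ∑ a ∈ s, |d a b| ≤ 2 * (μ (G b)).toReal := by
    intro b
    have hpt : ∀ a, |d a b| ≤ (μ (F a ∩ G b)).toReal + (μ (F a)).toReal * (μ (G b)).toReal := by
      intro a
      refine (abs_sub _ _).trans ?_
      rw [abs_of_nonneg ENNReal.toReal_nonneg,
        abs_of_nonneg (mul_nonneg ENNReal.toReal_nonneg ENNReal.toReal_nonneg)]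
    have h1 : ∑ a ∈ s, (μ (F a ∩ G b)).toReal ≤ (μ (G b)).toReal := by
      rw [← ENNReal.toReal_sum (fun a _ => measure_ne_top μ _)]
      refine ENNReal.toReal_mono (measure_ne_top μ _) ?_
      have := measure_biUnion_finset (μ := μ)
        (fun a ha a' ha' haa' => (hFd a a' haa').mono inter_subset_left inter_subset_left)
        (fun a (_ : a ∈ s) => (hA _ (hFm a)).inter (hB _ (hGm b)))
      rw [← this]
      exact measure_mono (iUnion₂_subset (fun a _ => inter_subset_right))
    have h2 : ∑ a ∈ s, (μ (F a)).toReal * (μ (G b)).toReal ≤ (μ (G b)).toReal := by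
      rw [← Finset.sum_mul]
      have hs1 : ∑ a ∈ s, (μ (F a)).toReal ≤ 1 := by
        rw [← ENNReal.toReal_sum (fun a _ => measure_ne_top μ _)]
        have : ∑ a ∈ s, μ (F a) ≤ 1 := by
          rw [← measure_biUnion_finset (μ := μ)
            (fun a ha a' ha' haa' => hFd a a' haa') (fun a _ => hA _ (hFm a))]
          exact (measure_mono (subset_univ _)).trans (by simp)
        calc (∑ a ∈ s, μ (F a)).toReal ≤ (1 : ℝ≥0∞).toReal :=
              ENNReal.toReal_mono (by simp) this
          _ = 1 := by simp
      calc (∑ a ∈ s, (μ (F a)).toReal) * (μ (G b)).toReal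
          ≤ 1 * (μ (G b)).toReal :=
            mul_le_mul_of_nonneg_right hs1 ENNReal.toReal_nonneg
        _ = (μ (G b)).toReal := one_mul _
    calc ∑ a ∈ s, |d a b| ≤ ∑ a ∈ s, ((μ (F a ∩ G b)).toReal
          + (μ (F a)).toReal * (μ (G b)).toReal) := Finset.sum_le_sum (fun a _ => hpt a)
      _ = ∑ a ∈ s, (μ (F a ∩ G b)).toReal + ∑ a ∈ s, (μ (F a)).toReal * (μ (G b)).toReal :=
          Finset.sum_add_distrib
      _ ≤ 2 * (μ (G b)).toReal := by linarith
  -- Cauchy-Schwarz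
  set X := ∑ a ∈ s, a ^ 2 * (μ (F a)).toReal with hX
  set Y := ∑ b ∈ t, b ^ 2 * (μ (G b)).toReal with hY
  have hX0 : 0 ≤ X := Finset.sum_nonneg
    (fun a _ => mul_nonneg (sq_nonneg a) ENNReal.toReal_nonneg)
  have hY0 : 0 ≤ Y := Finset.sum_nonneg
    (fun b _ => mul_nonneg (sq_nonneg b) ENNReal.toReal_nonneg)
  have cs := Finset.sum_mul_sq_le_sq_mul_sq (s ×ˢ t)
    (fun p => |p.1| * Real.sqrt |d p.1 p.2|) (fun p => |p.2| * Real.sqrt |d p.1 p.2|)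
  have hfg : ∀ p : ℝ × ℝ, (|p.1| * Real.sqrt |d p.1 p.2|) * (|p.2| * Real.sqrt |d p.1 p.2|)
      = |p.1| * |p.2| * |d p.1 p.2| := by
    intro p
    have h := Real.mul_self_sqrt (abs_nonneg (d p.1 p.2))
    calc |p.1| * Real.sqrt |d p.1 p.2| * (|p.2| * Real.sqrt |d p.1 p.2|)
        = |p.1| * |p.2| * (Real.sqrt |d p.1 p.2| * Real.sqrt |d p.1 p.2|) := by ring
      _ = |p.1| * |p.2| * |d p.1 p.2| := by rw [h]
  have hf2 : ∀ p : ℝ × ℝ, (|p.1| * Real.sqrt |d p.1 p.2|) ^ 2 = p.1 ^ 2 * |d p.1 p.2| := by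
    intro p
    rw [mul_pow, Real.sq_sqrt (abs_nonneg _), sq_abs]
  have hg2 : ∀ p : ℝ × ℝ, (|p.2| * Real.sqrt |d p.1 p.2|) ^ 2 = p.2 ^ 2 * |d p.1 p.2| := by
    intro p
    rw [mul_pow, Real.sq_sqrt (abs_nonneg _), sq_abs]
  have sumF : ∑ p ∈ s ×ˢ t, (|p.1| * Real.sqrt |d p.1 p.2|) ^ 2 ≤ 2 * φ * X := by
    simp_rw [hf2]
    rw [Finset.sum_product]
    calc ∑ a ∈ s, ∑ b ∈ t, a ^ 2 * |d a b| = ∑ a ∈ s, a ^ 2 * ∑ b ∈ t, |d a b| := by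
          simp_rw [Finset.mul_sum]
      _ ≤ ∑ a ∈ s, a ^ 2 * (2 * φ * (μ (F a)).toReal) :=
          Finset.sum_le_sum (fun a _ => mul_le_mul_of_nonneg_left (rowsum a) (sq_nonneg a))
      _ = 2 * φ * X := by rw [hX, Finset.mul_sum]; exact Finset.sum_congr rfl (fun a _ => by ring)
  have sumG : ∑ p ∈ s ×ˢ t, (|p.2| * Real.sqrt |d p.1 p.2|) ^ 2 ≤ 2 * Y := by
    simp_rw [hg2]
    rw [Finset.sum_product_right]
    calc ∑ b ∈ t, ∑ a ∈ s, b ^ 2 * |d a b| = ∑ b ∈ t, b ^ 2 * ∑ a ∈ s, |d a b| := by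
          simp_rw [Finset.mul_sum]
      _ ≤ ∑ b ∈ t, b ^ 2 * (2 * (μ (G b)).toReal) :=
          Finset.sum_le_sum (fun b _ => mul_le_mul_of_nonneg_left (colsum b) (sq_nonneg b))
      _ = 2 * Y := by rw [hY, Finset.mul_sum]; exact Finset.sum_congr rfl (fun b _ => by ring)
  set S := ∑ p ∈ s ×ˢ t, (|p.1| * Real.sqrt |d p.1 p.2|) * (|p.2| * Real.sqrt |d p.1 p.2|)
    with hS
  have hS0 : 0 ≤ S := Finset.sum_nonneg (fun p _ => mul_nonneg
    (mul_nonneg (abs_nonneg _) (Real.sqrt_nonneg _))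
    (mul_nonneg (abs_nonneg _) (Real.sqrt_nonneg _)))
  have habs : |∑ a ∈ s, ∑ b ∈ t, a * b * d a b| ≤ S := by
    rw [hS]
    simp_rw [hfg]
    rw [Finset.sum_product (f := fun p => |p.1| * |p.2| * |d p.1 p.2|)]
    calc |∑ a ∈ s, ∑ b ∈ t, a * b * d a b|
        ≤ ∑ a ∈ s, |∑ b ∈ t, a * b * d a b| := Finset.abs_sum_le_sum_abs _ _
      _ ≤ ∑ a ∈ s, ∑ b ∈ t, |a * b * d a b| :=
          Finset.sum_le_sum (fun a _ => Finset.abs_sum_le_sum_abs _ _)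
      _ = ∑ a ∈ s, ∑ b ∈ t, |a| * |b| * |d a b| := by simp_rw [abs_mul]
  have hSsq : S ^ 2 ≤ (2 * φ * X) * (2 * Y) := by
    refine le_trans cs ?_
    refine mul_le_mul sumF sumG ?_ ?_
    · exact Finset.sum_nonneg (fun p _ => sq_nonneg _)
    · positivity
  have hfinal : S ≤ 2 * Real.sqrt φ * Real.sqrt X * Real.sqrt Y := by
    have h4 : (2 * φ * X) * (2 * Y) = (2 * Real.sqrt φ * Real.sqrt X * Real.sqrt Y) ^ 2 := by
      rw [mul_pow, mul_pow, mul_pow, Real.sq_sqrt hφ0, Real.sq_sqrt hX0, Real.sq_sqrt hY0]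
      ring
    rw [h4] at hSsq
    calc S = Real.sqrt (S ^ 2) := (Real.sqrt_sq hS0).symm
      _ ≤ Real.sqrt ((2 * Real.sqrt φ * Real.sqrt X * Real.sqrt Y) ^ 2) :=
          Real.sqrt_le_sqrt hSsq
      _ = 2 * Real.sqrt φ * Real.sqrt X * Real.sqrt Y := Real.sqrt_sq (by positivity)
  exact le_trans habs hfinal
lemma cov_finite_range [IsProbabilityMeasure μ] (hA : mA ≤ m) (hB : mB ≤ m)
    {f g : Ω → ℝ} (hfA : Measurable[mA] f) (hgB : Measurable[mB] g)
    {s t : Finset ℝ} (hfs : ∀ x, f x ∈ s) (hgt : ∀ x, g x ∈ t) :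
    |(∫ x, f x * g x ∂μ) - (∫ x, f x ∂μ) * (∫ x, g x ∂μ)|
      ≤ 2 * Real.sqrt (phiCoeff μ mA mB)
        * Real.sqrt (∫ x, (f x) ^ 2 ∂μ) * Real.sqrt (∫ x, (g x) ^ 2 ∂μ) := by
  have hf : Measurable[m] f := fun _ hs => hA _ (hfA hs)
  have hg : Measurable[m] g := fun _ hs => hB _ (hgB hs)
  rw [expand_mul hf hg hfs hgt, expand_single hf hfs, expand_single hg hgt,
    expand_sq hf hfs, expand_sq hg hgt, Finset.sum_mul_sum]
  have : ∀ a b : ℝ, a * (μ (f ⁻¹' {a})).toReal * (b * (μ (g ⁻¹' {b})).toReal)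
      = a * b * ((μ (f ⁻¹' {a})).toReal * (μ (g ⁻¹' {b})).toReal) := fun a b => by ring
  simp_rw [this, ← Finset.sum_sub_distrib, ← mul_sub]
  exact core_lemma hA hB s t (fun a => f ⁻¹' {a}) (fun b => g ⁻¹' {b})
    (fun a => hfA (measurableSet_singleton a)) (fun b => hgB (measurableSet_singleton b))
    (fun a a' haa' => Set.disjoint_left.mpr (fun x hx hx' => haa' (hx.symm.trans hx')))
    (fun b b' hbb' => Set.disjoint_left.mpr (fun x hx hx' => hbb' (hx.symm.trans hx')))

set_option maxHeartbeats 1000000 in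
lemma cov_memL2 [IsProbabilityMeasure (α := Ω) (m0 := m) μ] (hA : mA ≤ m) (hB : mB ≤ m)
    {f g : Ω → ℝ} (hfA : Measurable[mA] f) (hgB : Measurable[mB] g)
    (hf2 : MemLp f 2 μ) (hg2 : MemLp g 2 μ) :
    |(∫ x, f x * g x ∂μ) - (∫ x, f x ∂μ) * (∫ x, g x ∂μ)|
      ≤ 2 * Real.sqrt (phiCoeff μ mA mB) * (eLpNorm f 2 μ).toReal * (eLpNorm g 2 μ).toReal := by
  set sφ := Real.sqrt (phiCoeff μ mA mB) with hsφ
  have hsφ0 : 0 ≤ sφ := Real.sqrt_nonneg _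
  set Nf := (eLpNorm f 2 μ).toReal with hNf
  set Ng := (eLpNorm g 2 μ).toReal with hNg
  have hNf0 : 0 ≤ Nf := ENNReal.toReal_nonneg
  have hNg0 : 0 ≤ Ng := ENNReal.toReal_nonneg
  set C : ℝ := 2 * Ng + 2 * (Nf + 1) + 2 * sφ * (Nf + Ng + 1) with hC
  have hC0 : 0 ≤ C := by
    have h1 : 0 ≤ 2 * sφ * (Nf + Ng + 1) := by positivity
    linarith
  have key : ∀ ε : ℝ, 0 < ε → ε ≤ 1 →
      |(∫ x, f x * g x ∂μ) - (∫ x, f x ∂μ) * (∫ x, g x ∂μ)|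
        ≤ 2 * sφ * Nf * Ng + ε * C := by
    intro ε hε hε1
    have hεne : (ENNReal.ofReal ε) ≠ 0 := (ENNReal.ofReal_pos.mpr hε).ne'
    -- approximate f
    have hfA' : StronglyMeasurable[mA] f := hfA.stronglyMeasurable
    have hftrim : MemLp f 2 (μ.trim hA) :=
      ⟨hfA'.aestronglyMeasurable, by rw [eLpNorm_trim hA hfA']; exact hf2.2⟩
    obtain ⟨f', hf'lt⟩ := @exists_approx Ω mA (μ.trim hA) f hftrim _ hεne
    have hδfA : StronglyMeasurable[mA] (f - ⇑f') := hfA'.sub f'.stronglyMeasurable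
    have hltf : eLpNorm (f - ⇑f') 2 μ < ENNReal.ofReal ε := by
      rwa [eLpNorm_trim hA hδfA] at hf'lt
    have hδf2 : MemLp (f - ⇑f') 2 μ :=
      ⟨(hδfA.mono hA).aestronglyMeasurable, hltf.trans ENNReal.ofReal_lt_top⟩
    have hf'2 : MemLp ⇑f' 2 μ := by
      have := hf2.sub hδf2
      simpa [sub_sub_cancel] using this
    have hNδf : (eLpNorm (f - ⇑f') 2 μ).toReal ≤ ε :=
      ENNReal.toReal_le_of_le_ofReal hε.le hltf.le
    have hNf' : (eLpNorm ⇑f' 2 μ).toReal ≤ Nf + ε := by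
      have h1 : eLpNorm ⇑f' 2 μ ≤ eLpNorm f 2 μ + eLpNorm (f - ⇑f') 2 μ := by
        calc eLpNorm ⇑f' 2 μ = eLpNorm (f - (f - ⇑f')) 2 μ := by rw [sub_sub_cancel]
          _ ≤ _ := eLpNorm_sub_le hf2.1 hδf2.1 one_le_two
      calc (eLpNorm ⇑f' 2 μ).toReal
          ≤ (eLpNorm f 2 μ + eLpNorm (f - ⇑f') 2 μ).toReal :=
            ENNReal.toReal_mono (ENNReal.add_ne_top.mpr ⟨hf2.2.ne, hδf2.2.ne⟩) h1
        _ = Nf + (eLpNorm (f - ⇑f') 2 μ).toReal :=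
            ENNReal.toReal_add hf2.2.ne hδf2.2.ne
        _ ≤ Nf + ε := by linarith
    -- approximate g
    have hgB' : StronglyMeasurable[mB] g := hgB.stronglyMeasurable
    have hgtrim : MemLp g 2 (μ.trim hB) :=
      ⟨hgB'.aestronglyMeasurable, by rw [eLpNorm_trim hB hgB']; exact hg2.2⟩
    obtain ⟨g', hg'lt⟩ := @exists_approx Ω mB (μ.trim hB) g hgtrim _ hεne
    have hδgB : StronglyMeasurable[mB] (g - ⇑g') := hgB'.sub g'.stronglyMeasurable
    have hltg : eLpNorm (g - ⇑g') 2 μ < ENNReal.ofReal ε := by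
      rwa [eLpNorm_trim hB hδgB] at hg'lt
    have hδg2 : MemLp (g - ⇑g') 2 μ :=
      ⟨(hδgB.mono hB).aestronglyMeasurable, hltg.trans ENNReal.ofReal_lt_top⟩
    have hg'2 : MemLp ⇑g' 2 μ := by
      have := hg2.sub hδg2
      simpa [sub_sub_cancel] using this
    have hNδg : (eLpNorm (g - ⇑g') 2 μ).toReal ≤ ε :=
      ENNReal.toReal_le_of_le_ofReal hε.le hltg.le
    have hNg' : (eLpNorm ⇑g' 2 μ).toReal ≤ Ng + ε := by
      have h1 : eLpNorm ⇑g' 2 μ ≤ eLpNorm g 2 μ + eLpNorm (g - ⇑g') 2 μ := by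
        calc eLpNorm ⇑g' 2 μ = eLpNorm (g - (g - ⇑g')) 2 μ := by rw [sub_sub_cancel]
          _ ≤ _ := eLpNorm_sub_le hg2.1 hδg2.1 one_le_two
      calc (eLpNorm ⇑g' 2 μ).toReal
          ≤ (eLpNorm g 2 μ + eLpNorm (g - ⇑g') 2 μ).toReal :=
            ENNReal.toReal_mono (ENNReal.add_ne_top.mpr ⟨hg2.2.ne, hδg2.2.ne⟩) h1
        _ = Ng + (eLpNorm (g - ⇑g') 2 μ).toReal :=
            ENNReal.toReal_add hg2.2.ne hδg2.2.ne
        _ ≤ Ng + ε := by linarith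
    -- integrability
    have hintf : Integrable f μ := hf2.integrable one_le_two
    have hintf' : Integrable ⇑f' μ := hf'2.integrable one_le_two
    have hintg : Integrable g μ := hg2.integrable one_le_two
    have hintg' : Integrable ⇑g' μ := hg'2.integrable one_le_two
    -- decomposition identities
    have eq1 : ∫ x, f x * g x ∂μ
        = (∫ x, (f - ⇑f') x * g x ∂μ) + ∫ x, f' x * g x ∂μ := by
      rw [← integral_add (myIntegrable_mul hδf2 hg2) (myIntegrable_mul hf'2 hg2)]
      refine integral_congr_ae (Eventually.of_forall fun x => ?_)
      simp [Pi.sub_apply]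
      ring
    have eq2 : ∫ x, f' x * g x ∂μ
        = (∫ x, f' x * (g - ⇑g') x ∂μ) + ∫ x, f' x * g' x ∂μ := by
      rw [← integral_add (myIntegrable_mul hf'2 hδg2) (myIntegrable_mul hf'2 hg'2)]
      refine integral_congr_ae (Eventually.of_forall fun x => ?_)
      simp [Pi.sub_apply]
      ring
    have e3 : ∫ x, f x ∂μ = (∫ x, (f - ⇑f') x ∂μ) + ∫ x, f' x ∂μ := by
      have := integral_sub hintf hintf'
      simp only [Pi.sub_apply] at this ⊢
      rw [this]; ring
    have e4 : ∫ x, g x ∂μ = (∫ x, (g - ⇑g') x ∂μ) + ∫ x, g' x ∂μ := by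
      have := integral_sub hintg hintg'
      simp only [Pi.sub_apply] at this ⊢
      rw [this]; ring
    have iden : (∫ x, f x * g x ∂μ) - (∫ x, f x ∂μ) * (∫ x, g x ∂μ)
        = ((∫ x, (f - ⇑f') x * g x ∂μ) - (∫ x, (f - ⇑f') x ∂μ) * (∫ x, g x ∂μ))
          + ((∫ x, f' x * (g - ⇑g') x ∂μ) - (∫ x, f' x ∂μ) * (∫ x, (g - ⇑g') x ∂μ))
          + ((∫ x, f' x * g' x ∂μ) - (∫ x, f' x ∂μ) * (∫ x, g' x ∂μ)) := by
      linear_combination eq1 + eq2 - (∫ x, g x ∂μ) * e3 - (∫ x, f' x ∂μ) * e4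
    -- bounds on pieces
    have t1 : |∫ x, (f - ⇑f') x * g x ∂μ|
        ≤ (eLpNorm (f - ⇑f') 2 μ).toReal * Ng := abs_integral_mul_le hδf2 hg2
    have t2 : |∫ x, (f - ⇑f') x ∂μ| ≤ (eLpNorm (f - ⇑f') 2 μ).toReal :=
      abs_integral_le hδf2
    have t2' : |∫ x, g x ∂μ| ≤ Ng := abs_integral_le hg2
    have t3 : |∫ x, f' x * (g - ⇑g') x ∂μ|
        ≤ (eLpNorm ⇑f' 2 μ).toReal * (eLpNorm (g - ⇑g') 2 μ).toReal :=
      abs_integral_mul_le hf'2 hδg2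
    have t4 : |∫ x, f' x ∂μ| ≤ (eLpNorm ⇑f' 2 μ).toReal := abs_integral_le hf'2
    have t4' : |∫ x, (g - ⇑g') x ∂μ| ≤ (eLpNorm (g - ⇑g') 2 μ).toReal :=
      abs_integral_le hδg2
    have t5 : |(∫ x, f' x * g' x ∂μ) - (∫ x, f' x ∂μ) * (∫ x, g' x ∂μ)|
        ≤ 2 * sφ * (eLpNorm ⇑f' 2 μ).toReal * (eLpNorm ⇑g' 2 μ).toReal := by
      have := cov_finite_range (μ := μ) hA hB (@SimpleFunc.measurable Ω ℝ mA _ f')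
        (@SimpleFunc.measurable Ω ℝ mB _ g')
        (fun x => @SimpleFunc.mem_range_self Ω ℝ mA f' x)
        (fun x => @SimpleFunc.mem_range_self Ω ℝ mB g' x)
      rwa [sqrt_integral_sq hf'2, sqrt_integral_sq hg'2] at this
    -- assemble
    rw [iden]
    set A1 := (∫ x, (f - ⇑f') x * g x ∂μ) - (∫ x, (f - ⇑f') x ∂μ) * (∫ x, g x ∂μ) with hA1
    set A2 := (∫ x, f' x * (g - ⇑g') x ∂μ) - (∫ x, f' x ∂μ) * (∫ x, (g - ⇑g') x ∂μ) with hA2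
    set A3 := (∫ x, f' x * g' x ∂μ) - (∫ x, f' x ∂μ) * (∫ x, g' x ∂μ) with hA3
    have hb1 : |A1| ≤ 2 * ε * Ng := by
      have t6 : |(∫ x, (f - ⇑f') x ∂μ) * (∫ x, g x ∂μ)|
          ≤ (eLpNorm (f - ⇑f') 2 μ).toReal * Ng := by
        rw [abs_mul]
        exact mul_le_mul t2 t2' (abs_nonneg _) ENNReal.toReal_nonneg
      have h := (abs_sub _ _).trans (add_le_add t1 t6)
      have h2 : (eLpNorm (f - ⇑f') 2 μ).toReal * Ng ≤ ε * Ng :=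
        mul_le_mul_of_nonneg_right hNδf hNg0
      calc |A1| ≤ (eLpNorm (f - ⇑f') 2 μ).toReal * Ng
            + (eLpNorm (f - ⇑f') 2 μ).toReal * Ng := h
        _ ≤ 2 * ε * Ng := by linarith
    have hb2 : |A2| ≤ 2 * ε * (Nf + 1) := by
      have t6 : |(∫ x, f' x ∂μ) * (∫ x, (g - ⇑g') x ∂μ)|
          ≤ (eLpNorm ⇑f' 2 μ).toReal * (eLpNorm (g - ⇑g') 2 μ).toReal := by
        rw [abs_mul]
        exact mul_le_mul t4 t4' (abs_nonneg _) ENNReal.toReal_nonneg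
      have h := (abs_sub _ _).trans (add_le_add t3 t6)
      have hf'le : (eLpNorm ⇑f' 2 μ).toReal ≤ Nf + 1 := le_trans hNf' (by linarith)
      have h2 : (eLpNorm ⇑f' 2 μ).toReal * (eLpNorm (g - ⇑g') 2 μ).toReal
          ≤ (Nf + 1) * ε :=
        mul_le_mul hf'le hNδg ENNReal.toReal_nonneg (by linarith)
      calc |A2| ≤ (eLpNorm ⇑f' 2 μ).toReal * (eLpNorm (g - ⇑g') 2 μ).toReal
            + (eLpNorm ⇑f' 2 μ).toReal * (eLpNorm (g - ⇑g') 2 μ).toReal := h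
        _ ≤ 2 * ε * (Nf + 1) := by linarith
    have hb3 : |A3| ≤ 2 * sφ * Nf * Ng + ε * (2 * sφ * (Nf + Ng + 1)) := by
      have h2 : 2 * sφ * (eLpNorm ⇑f' 2 μ).toReal * (eLpNorm ⇑g' 2 μ).toReal
          ≤ 2 * sφ * ((Nf + ε) * (Ng + ε)) := by
        have := mul_le_mul hNf' hNg' ENNReal.toReal_nonneg (by linarith)
        calc 2 * sφ * (eLpNorm ⇑f' 2 μ).toReal * (eLpNorm ⇑g' 2 μ).toReal
            = 2 * sφ * ((eLpNorm ⇑f' 2 μ).toReal * (eLpNorm ⇑g' 2 μ).toReal) := by ring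
          _ ≤ 2 * sφ * ((Nf + ε) * (Ng + ε)) :=
              mul_le_mul_of_nonneg_left this (by positivity)
      have h3 : 2 * sφ * ((Nf + ε) * (Ng + ε))
          ≤ 2 * sφ * Nf * Ng + ε * (2 * sφ * (Nf + Ng + 1)) := by
        have h6 : Nf + Ng + ε ≤ Nf + Ng + 1 := by linarith
        have h4 : 2 * sφ * ((Nf + ε) * (Ng + ε))
            = 2 * sφ * Nf * Ng + (2 * sφ * ε) * (Nf + Ng + ε) := by ring
        have h5 : (2 * sφ * ε) * (Nf + Ng + ε) ≤ (2 * sφ * ε) * (Nf + Ng + 1) :=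
          mul_le_mul_of_nonneg_left h6 (by positivity)
        have h7 : ε * (2 * sφ * (Nf + Ng + 1)) = (2 * sφ * ε) * (Nf + Ng + 1) := by ring
        linarith
      exact le_trans t5 (le_trans h2 h3)
    calc |A1 + A2 + A3| ≤ |A1| + |A2| + |A3| := abs_add_three _ _ _
      _ ≤ 2 * ε * Ng + 2 * ε * (Nf + 1)
          + (2 * sφ * Nf * Ng + ε * (2 * sφ * (Nf + Ng + 1))) :=
          add_le_add (add_le_add hb1 hb2) hb3
      _ = 2 * sφ * Nf * Ng + ε * C := by rw [hC]; ring
  -- let ε → 0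
  refine le_of_forall_pos_le_add ?_
  intro δ hδ
  have hC1 : (0:ℝ) < C + 1 := by linarith
  set ε := min 1 (δ / (C + 1)) with hεdef
  have hε0 : 0 < ε := lt_min one_pos (div_pos hδ hC1)
  have hεle : ε * C ≤ δ := by
    calc ε * C ≤ (δ / (C + 1)) * C :=
          mul_le_mul_of_nonneg_right (min_le_right _ _) hC0
      _ ≤ δ := by
          rw [div_mul_eq_mul_div, div_le_iff₀ hC1]
          nlinarith
  have := key ε hε0 (min_le_left _ _)
  linarith

end Main

/-- For any two sub-σ-algebras, `ρ(𝒜,ℬ) ≤ 2 √(φ(𝒜,ℬ))`. -/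
theorem rho_le_two_sqrt_phi {Ω : Type*} [m : MeasurableSpace Ω]
    (μ : Measure Ω) [IsProbabilityMeasure μ]
    (mA mB : MeasurableSpace Ω) (hA : mA ≤ m) (hB : mB ≤ m) :
    rhoCoeff μ mA mB ≤ 2 * Real.sqrt (phiCoeff μ mA mB) := by
  refine Real.sSup_le ?_ (by positivity)
  rintro r ⟨f, g, hfA, hgB, hf2, hg2, hf0, hg0, hfsq, hgsq, rfl⟩
  have h := cov_memL2 hA hB hfA hgB hf2 hg2
  rw [hf0, zero_mul, sub_zero] at h
  set sφ := Real.sqrt (phiCoeff μ mA mB) with hsφdef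
  have hsφ0 : 0 ≤ sφ := Real.sqrt_nonneg _
  set Nf := (eLpNorm f 2 μ).toReal with hNf
  set Ng := (eLpNorm g 2 μ).toReal with hNg
  have hNf0 : 0 ≤ Nf := ENNReal.toReal_nonneg
  have hNg0 : 0 ≤ Ng := ENNReal.toReal_nonneg
  have hNf1 : Nf ≤ 1 := by
    rw [hNf, ← sqrt_integral_sq hf2]
    calc Real.sqrt (∫ x, (f x) ^ 2 ∂μ) ≤ Real.sqrt 1 := Real.sqrt_le_sqrt hfsq
      _ = 1 := Real.sqrt_one
  have hNg1 : Ng ≤ 1 := by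
    rw [hNg, ← sqrt_integral_sq hg2]
    calc Real.sqrt (∫ x, (g x) ^ 2 ∂μ) ≤ Real.sqrt 1 := Real.sqrt_le_sqrt hgsq
      _ = 1 := Real.sqrt_one
  have hr := le_trans (le_abs_self _) h
  have hNfNg : Nf * Ng ≤ 1 := by nlinarith
  have h2 : 2 * sφ * Nf * Ng ≤ 2 * sφ := by
    have : 2 * sφ * (Nf * Ng) ≤ 2 * sφ * 1 :=
      mul_le_mul_of_nonneg_left hNfNg (by positivity)
    nlinarith
  linarith
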